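/- A graph (V,H) is separable if and only if it is orderable, i.e., there is an ordering v₁, v₂, … of V such that each vⱼ is either isolated among its predecessors ({vᵢ,vⱼ} ∉ H for all i < j) or dominating among its predecessors ({vᵢ,vⱼ} ∈ H for all i < j). -/

import Mathlib

open Finset

variable {V : Type*}

/-- A `k`-hypergraph `H` is separable if some vertex labeling `x : V → ℝ` has
`H` equal to the set of `k`-subsets with nonnegative label sum. -/
def SeparableHypergraph [Fintype V] [DecidableEq V] (k : ℕ) (H : Finset (Finset V)) : Prop :=
  ∃ x : V → ℝ, ∀ E : Finset V, E ∈ H ↔ E.card = k ∧ 0 ≤ ∑ v ∈ E, x v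

/-- A `k`-hypergraph `H` is equatable if some nonzero nonnegative labeling `y` of the
`k`-subsets of `V` has, for every vertex `v`, the sum of labels of edges containing `v`
equal to the sum of labels of non-edges containing `v`. -/
def EquatableHypergraph [Fintype V] [DecidableEq V] (k : ℕ) (H : Finset (Finset V)) : Prop :=
  ∃ y : Finset V → ℝ,
    (∀ G, 0 ≤ y G) ∧
    (∃ G ∈ (univ : Finset V).powersetCard k, y G ≠ 0) ∧
    ∀ v : V,
      ∑ E ∈ ((univ : Finset V).powersetCard k).filter (fun E => v ∈ E ∧ E ∈ H), y E =
      ∑ F ∈ ((univ : Finset V).powersetCard k).filter (fun F => v ∈ F ∧ F ∉ H), y F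

/-- A hypergraph is exchangeable if there are edges `E₁, E₂` and `v₁ ∈ E₁ \ E₂`,
`v₂ ∈ E₂ \ E₁` such that both sets obtained by exchanging `v₁` and `v₂` are non-edges. -/
def ExchangeableHypergraph [DecidableEq V] (H : Finset (Finset V)) : Prop :=
  ∃ E₁ ∈ H, ∃ E₂ ∈ H, ∃ v₁ ∈ E₁ \ E₂, ∃ v₂ ∈ E₂ \ E₁,
    insert v₂ (E₁.erase v₁) ∉ H ∧ insert v₁ (E₂.erase v₂) ∉ H

/-- A graph is separable iff it is orderable: there is an ordering of the vertices in
which every vertex is isolated or dominating among its predecessors. -/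
theorem graph_separable_iff_orderable [Fintype V] [DecidableEq V]
    (H : Finset (Finset V))
    (hn : 3 ≤ Fintype.card V) (hH : ∀ E ∈ H, E.card = 2) :
    SeparableHypergraph 2 H ↔
      ∃ e : Fin (Fintype.card V) ≃ V, ∀ j : Fin (Fintype.card V),
        (∀ i, i < j → ({e i, e j} : Finset V) ∉ H) ∨
        (∀ i, i < j → ({e i, e j} : Finset V) ∈ H) := by
  unfold SeparableHypergraph
  constructor
  · rintro ⟨x, hx⟩
    set key : V → ℝ ×ₗ ℝ := fun v => toLex (|x v|, if x v < 0 then 0 else 1) with hkey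
    set e₀ : V ≃ Fin (Fintype.card V) := Fintype.equivFin V with he₀
    set g : Fin (Fintype.card V) → ℝ ×ₗ ℝ := key ∘ e₀.symm with hg
    refine ⟨(Tuple.sort g).trans e₀.symm, fun j => ?_⟩
    have hmono : ∀ i j : Fin (Fintype.card V), i ≤ j →
        key (e₀.symm (Tuple.sort g i)) ≤ key (e₀.symm (Tuple.sort g j)) := by
      intro i j hij
      exact Tuple.monotone_sort g hij
    set e : Fin (Fintype.card V) ≃ V := (Tuple.sort g).trans e₀.symm with he
    have hev : ∀ i, e i = e₀.symm (Tuple.sort g i) := fun i => rfl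
    have hne : ∀ i, i ≠ j → e i ≠ e j := fun i hij => fun h => hij (e.injective h)
    by_cases hpos : 0 ≤ x (e j)
    · right
      intro i hij
      rw [hx]
      refine ⟨card_pair (hne i hij.ne), ?_⟩
      rw [Finset.sum_pair (hne i hij.ne)]
      have hth := hmono i j hij.le
      rw [← hev i, ← hev j, hkey, Prod.Lex.le_iff] at hth
      dsimp only at hth
      have h1 : |x (e i)| ≤ |x (e j)| := by
        rcases hth with h | ⟨h, _⟩
        · exact le_of_lt h
        · exact le_of_eq h
      have := neg_abs_le (x (e i))
      have := le_abs_self (x (e j))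
      have hxj : |x (e j)| = x (e j) := abs_of_nonneg hpos
      nlinarith [neg_abs_le (x (e i))]
    · left
      intro i hij hmem
      push_neg at hpos
      have hsum : 0 ≤ x (e i) + x (e j) := by
        have h2 := ((hx _).mp hmem).2
        rwa [Finset.sum_pair (hne i hij.ne)] at h2
      have hth := hmono i j hij.le
      rw [← hev i, ← hev j, hkey, Prod.Lex.le_iff] at hth
      dsimp only at hth
      rw [if_pos hpos] at hth
      rcases hth with h | ⟨h, h2⟩
      · -- |x (e i)| < |x (e j)|, x (e j) < 0
        have := le_abs_self (x (e i))
        have hxj : |x (e j)| = -(x (e j)) := abs_of_neg hpos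
        have h' : |x (e i)| < |x (e j)| := h
        nlinarith
      · -- equal abs, second comps: (if x(e i) < 0 then 0 else 1) ≤ 0, so x (e i) < 0
        have hi : x (e i) < 0 := by
          by_contra hc
          rw [if_neg hc] at h2
          norm_num at h2
        linarith
  · rintro ⟨e, hord⟩
    classical
    set P : Fin (Fintype.card V) → Prop := fun j => ∀ i, i < j → ({e i, e j} : Finset V) ∈ H with hP
    set x : V → ℝ := fun v => if P (e.symm v) then (3:ℝ) ^ (e.symm v : ℕ)
        else -((3:ℝ) ^ (e.symm v : ℕ)) with hxdef
    have habs : ∀ i : Fin (Fintype.card V), |x (e i)| = (3:ℝ) ^ (i : ℕ) := by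
      intro i
      simp only [hxdef, Equiv.symm_apply_apply]
      split
      · exact abs_of_nonneg (by positivity)
      · rw [abs_neg]; exact abs_of_nonneg (by positivity)
    have hkeysum : ∀ i j : Fin (Fintype.card V), i < j →
        (P j → 0 < x (e i) + x (e j)) ∧ (¬ P j → x (e i) + x (e j) < 0) := by
      intro i j hij
      have h3 : (3:ℝ) ^ (i:ℕ) < 3 ^ (j:ℕ) := by
        apply pow_lt_pow_right₀ (by norm_num) hij
      have hi1 := neg_abs_le (x (e i))
      have hi2 := le_abs_self (x (e i))
      rw [habs i] at hi1 hi2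
      constructor
      · intro hpj
        have : x (e j) = (3:ℝ) ^ (j:ℕ) := by
          simp only [hxdef, Equiv.symm_apply_apply, if_pos hpj]
        linarith
      · intro hpj
        have : x (e j) = -((3:ℝ) ^ (j:ℕ)) := by
          simp only [hxdef, Equiv.symm_apply_apply, if_neg hpj]
        linarith
    have hmem : ∀ i j : Fin (Fintype.card V), i < j → (({e i, e j} : Finset V) ∈ H ↔ P j) := by
      intro i j hij
      constructor
      · intro hm
        by_contra hpj
        rcases hord j with hiso | hdom
        · exact hiso i hij hm
        · exact hpj hdom
      · intro hpj; exact hpj i hij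
    refine ⟨x, fun E => ?_⟩
    constructor
    · intro hE
      have hc2 := hH E hE
      refine ⟨hc2, ?_⟩
      obtain ⟨u, v, huv, rfl⟩ := Finset.card_eq_two.mp hc2
      rw [Finset.sum_pair huv]
      have hne : e.symm u ≠ e.symm v := fun h => huv (e.symm.injective h)
      rcases hne.lt_or_gt with h | h
      · have := (hkeysum _ _ h).1
        have hmem' := hmem _ _ h
        simp only [Equiv.apply_symm_apply] at hmem' this
        have hp := hmem'.mp hE
        linarith [this hp]
      · have := (hkeysum _ _ h).1
        have hmem' := hmem _ _ h
        simp only [Equiv.apply_symm_apply] at hmem' this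
        rw [show ({v, u} : Finset V) = {u, v} from Finset.pair_comm v u] at hmem'
        have hp := hmem'.mp hE
        linarith [this hp]
    · rintro ⟨hc2, hsum⟩
      obtain ⟨u, v, huv, rfl⟩ := Finset.card_eq_two.mp hc2
      rw [Finset.sum_pair huv] at hsum
      have hne : e.symm u ≠ e.symm v := fun h => huv (e.symm.injective h)
      rcases hne.lt_or_gt with h | h
      · have hk := (hkeysum _ _ h).2
        have hmem' := hmem _ _ h
        simp only [Equiv.apply_symm_apply] at hmem' hk
        by_contra hE
        have := hk (fun hp => hE (hmem'.mpr hp))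
        linarith
      · have hk := (hkeysum _ _ h).2
        have hmem' := hmem _ _ h
        simp only [Equiv.apply_symm_apply] at hmem' hk
        rw [show ({v, u} : Finset V) = {u, v} from Finset.pair_comm v u] at hmem'
        by_contra hE
        have := hk (fun hp => hE (hmem'.mpr hp))
        linarith
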